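/- Soundness implies confinement for LDPC codes: Let H ∈ 𝔽₂^{m×n} and A ∈ 𝔽₂^{a×n} with H·Aᵀ = 0, and assume H is (t,f)-sound relative to A with f : ℕ → ℝ monotone increasing. Suppose every column of H has at most w nonzero entries, and let d_min = min{ |v| : v ∈ ker H, v ∉ rs(A) } (with d_min = ∞ if no such vector exists). Then for every positive integer t′ with w·t′ ≤ t and t′ + f(t) < d_min, the matrix H is (t′,f)-confined relative to A. -/

import Mathlib

open Matrix Kronecker

/-- The row space of a matrix over 𝔽₂: the span of its rows. -/
def rowSpace {m n : Type*} (A : Matrix m n (ZMod 2)) :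
    Submodule (ZMod 2) (n → ZMod 2) :=
  Submodule.span (ZMod 2) (Set.range A)

/-- The reduced weight of a vector `v` relative to a matrix `A`:
`‖v‖_A = min { |v+u| : u ∈ rs(A) }`. -/
noncomputable def redW {m n : Type*} [Fintype n] (A : Matrix m n (ZMod 2))
    (v : n → ZMod 2) : ℕ :=
  sInf {k | ∃ u ∈ rowSpace A, hammingNorm (v + u) = k}

/-- `H` is `(t,f)`-sound relative to `A`. -/
def Sound {m n a : Type*} [Fintype m] [Fintype n] (t : ℕ) (f : ℕ → ℝ)
    (H : Matrix m n (ZMod 2)) (A : Matrix a n (ZMod 2)) : Prop :=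
  ∀ s : m → ZMod 2, (∃ e, H.mulVec e = s) → hammingNorm s ≤ t →
    ∃ e, H.mulVec e = s ∧ (redW A e : ℝ) ≤ f (hammingNorm s)

/-- `H` is `(t,f)`-confined relative to `A`. -/
def Confined {m n a : Type*} [Fintype m] [Fintype n] (t : ℕ) (f : ℕ → ℝ)
    (H : Matrix m n (ZMod 2)) (A : Matrix a n (ZMod 2)) : Prop :=
  ∀ e : n → ZMod 2, redW A e ≤ t → (redW A e : ℝ) ≤ f (hammingNorm (H.mulVec e))

/-- Parity-check matrix of the length-`ℓ` repetition code. -/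
def repH (ℓ : ℕ) : Matrix (Fin (ℓ - 1)) (Fin ℓ) (ZMod 2) :=
  Matrix.of fun j i => if i.val = j.val ∨ i.val = j.val + 1 then 1 else 0

/-- Thickened X-check matrix `H̃_X = ( H_X⊗I_ℓ | I_{m_X}⊗hᵀ )`. -/
def thickHX {mX n : ℕ} (HX : Matrix (Fin mX) (Fin n) (ZMod 2)) (ℓ : ℕ) :
    Matrix (Fin mX × Fin ℓ) ((Fin n × Fin ℓ) ⊕ (Fin mX × Fin (ℓ - 1))) (ZMod 2) :=
  Matrix.fromCols (HX ⊗ₖ (1 : Matrix (Fin ℓ) (Fin ℓ) (ZMod 2)))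
    ((1 : Matrix (Fin mX) (Fin mX) (ZMod 2)) ⊗ₖ (repH ℓ)ᵀ)

/-- Thickened Z-check matrix `H̃_Z = [[ H_Z⊗I_ℓ , 0 ],[ I_n⊗h , H_Xᵀ⊗I_{ℓ−1} ]]`. -/
def thickHZ {mX mZ n : ℕ} (HX : Matrix (Fin mX) (Fin n) (ZMod 2))
    (HZ : Matrix (Fin mZ) (Fin n) (ZMod 2)) (ℓ : ℕ) :
    Matrix ((Fin mZ × Fin ℓ) ⊕ (Fin n × Fin (ℓ - 1)))
      ((Fin n × Fin ℓ) ⊕ (Fin mX × Fin (ℓ - 1))) (ZMod 2) :=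
  Matrix.fromBlocks (HZ ⊗ₖ (1 : Matrix (Fin ℓ) (Fin ℓ) (ZMod 2))) 0
    ((1 : Matrix (Fin n) (Fin n) (ZMod 2)) ⊗ₖ repH ℓ)
    (HXᵀ ⊗ₖ (1 : Matrix (Fin (ℓ - 1)) (Fin (ℓ - 1)) (ZMod 2)))

/-- Metacheck matrix `M̃_Z = ( I_{m_Z}⊗h | H_Z⊗I_{ℓ−1} )`. -/
def metaMZ {mZ n : ℕ} (HZ : Matrix (Fin mZ) (Fin n) (ZMod 2)) (ℓ : ℕ) :
    Matrix (Fin mZ × Fin (ℓ - 1))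
      ((Fin mZ × Fin ℓ) ⊕ (Fin n × Fin (ℓ - 1))) (ZMod 2) :=
  Matrix.fromCols ((1 : Matrix (Fin mZ) (Fin mZ) (ZMod 2)) ⊗ₖ repH ℓ)
    (HZ ⊗ₖ (1 : Matrix (Fin (ℓ - 1)) (Fin (ℓ - 1)) (ZMod 2)))

/-- Sheet-`τ` component of a vector on the thickened qubit space. -/
def sheet {n ℓ mX : ℕ} (τ : Fin ℓ)
    (v : (Fin n × Fin ℓ) ⊕ (Fin mX × Fin (ℓ - 1)) → ZMod 2) : Fin n → ZMod 2 :=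
  fun i => v (Sum.inl (i, τ))


lemma hammingNorm_add_le {n : ℕ} (x y : Fin n → ZMod 2) :
    hammingNorm (x + y) ≤ hammingNorm x + hammingNorm y := by
  calc hammingNorm (x + y) = hammingDist (x + y) 0 := (hammingDist_zero_right _).symm
    _ ≤ hammingDist (x + y) y + hammingDist y 0 := hammingDist_triangle _ _ _
    _ = hammingNorm x + hammingNorm y := by
        rw [hammingDist_eq_hammingNorm, hammingDist_zero_right]; simp [show -x = x from funext fun i => CharTwo.neg_eq (x i)]

lemma hammingNorm_sum_le {n : ℕ} {ι : Type*} (S : Finset ι) (g : ι → Fin n → ZMod 2) :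
    hammingNorm (∑ j ∈ S, g j) ≤ ∑ j ∈ S, hammingNorm (g j) := by
  classical
  induction S using Finset.induction_on with
  | empty => simp
  | insert _ _ hj ih =>
    rename_i j S'
    rw [Finset.sum_insert hj, Finset.sum_insert hj]
    exact le_trans (hammingNorm_add_le _ _) (by omega)

lemma redW_nonempty {m n : ℕ} (A : Matrix (Fin m) (Fin n) (ZMod 2)) (v : Fin n → ZMod 2) :
    {k | ∃ u ∈ rowSpace A, hammingNorm (v + u) = k}.Nonempty :=
  ⟨hammingNorm v, 0, Submodule.zero_mem _, by simp⟩

lemma redW_spec {m n : ℕ} (A : Matrix (Fin m) (Fin n) (ZMod 2)) (v : Fin n → ZMod 2) :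
    ∃ u ∈ rowSpace A, hammingNorm (v + u) = redW A v :=
  Nat.sInf_mem (redW_nonempty A v)

lemma redW_le {m n : ℕ} (A : Matrix (Fin m) (Fin n) (ZMod 2)) (v u : Fin n → ZMod 2)
    (hu : u ∈ rowSpace A) : redW A v ≤ hammingNorm (v + u) :=
  Nat.sInf_le ⟨u, hu, rfl⟩

lemma redW_coset {m n : ℕ} (A : Matrix (Fin m) (Fin n) (ZMod 2)) (v u : Fin n → ZMod 2)
    (hu : u ∈ rowSpace A) : redW A (v + u) = redW A v := by
  have key : ∀ x y : Fin n → ZMod 2, y ∈ rowSpace A → redW A (x + y) ≤ redW A x := by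
    intro x y hy
    obtain ⟨u', hu', h'⟩ := redW_spec A x
    have : x + u' = (x + y) + (y + u') := by
      have : y + y = 0 := by
        funext i; simp [CharTwo.add_self_eq_zero]
      rw [show (x + y) + (y + u') = x + (y + y) + u' by ring, this]; ring
    rw [← h', this]
    exact redW_le A _ _ (Submodule.add_mem _ hy hu')
  apply le_antisymm (key v u hu)
  have := key (v + u) u hu
  have huu : v + u + u = v := by
    have : u + u = 0 := by funext i; simp [CharTwo.add_self_eq_zero]
    rw [add_assoc, this, add_zero]
  rwa [huu] at this

lemma mulVec_rowSpace_zero {m n a : ℕ} (H : Matrix (Fin m) (Fin n) (ZMod 2))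
    (A : Matrix (Fin a) (Fin n) (ZMod 2)) (hHA : H * Aᵀ = 0)
    (u : Fin n → ZMod 2) (hu : u ∈ rowSpace A) : H.mulVec u = 0 := by
  have : u ∈ LinearMap.ker (Matrix.mulVecLin H) := by
    refine Submodule.span_le.mpr ?_ hu
    rintro _ ⟨i, rfl⟩
    simp only [SetLike.mem_coe, LinearMap.mem_ker, Matrix.mulVecLin_apply]
    funext j
    have := congrFun (congrFun hHA j) i
    simpa [Matrix.mul_apply, Matrix.mulVec, dotProduct, mul_comm] using this
  simpa using this

lemma hammingNorm_mulVec_le {m n : ℕ} (H : Matrix (Fin m) (Fin n) (ZMod 2))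
    (w : ℕ) (hcol : ∀ j : Fin n, hammingNorm (fun i => H i j) ≤ w)
    (e : Fin n → ZMod 2) : hammingNorm (H.mulVec e) ≤ w * hammingNorm e := by
  classical
  set S : Finset (Fin n) := Finset.univ.filter (fun j => e j ≠ 0) with hS
  have heq : H.mulVec e = ∑ j ∈ S, (fun i => H i j * e j) := by
    funext i
    have : (∑ j ∈ S, (fun i => H i j * e j)) i = ∑ j ∈ S, H i j * e j := by
      simp
    rw [this, Matrix.mulVec, dotProduct]
    exact (Finset.sum_subset (Finset.subset_univ S) (fun j _ hj => by
      simp only [hS, Finset.mem_filter, Finset.mem_univ, true_and, not_not] at hj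
      simp [hj])).symm
  rw [heq]
  calc hammingNorm (∑ j ∈ S, (fun i => H i j * e j))
      ≤ ∑ j ∈ S, hammingNorm (fun i => H i j * e j) := hammingNorm_sum_le S _
    _ ≤ ∑ j ∈ S, w := by
        refine Finset.sum_le_sum fun j _ => ?_
        refine le_trans ?_ (hcol j)
        exact hammingNorm_comp_le_hammingNorm (fun i c => c * e j) (fun i => by simp)
    _ = w * hammingNorm e := by
        rw [Finset.sum_const, smul_eq_mul, mul_comm]
        rfl

theorem soundness_implies_confinement
    {m n a : ℕ}
    (H : Matrix (Fin m) (Fin n) (ZMod 2))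
    (A : Matrix (Fin a) (Fin n) (ZMod 2))
    (hHA : H * Aᵀ = 0)
    (t : ℕ) (ht : 0 < t) (f : ℕ → ℝ) (hf : Monotone f)
    (hsound : Sound t f H A)
    (w : ℕ) (hcol : ∀ j : Fin n, hammingNorm (fun i => H i j) ≤ w)
    (t' : ℕ) (ht' : 0 < t') (hwt : w * t' ≤ t)
    (hdmin : ∀ v : Fin n → ZMod 2, H.mulVec v = 0 → v ∉ rowSpace A →
      (t' : ℝ) + f t < (hammingNorm v : ℝ)) :
    Confined t' f H A := by
  intro e he
  obtain ⟨u, hu, hmin⟩ := redW_spec A e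
  set e' := e + u with he'
  have hHe' : H.mulVec e' = H.mulVec e := by
    rw [he', Matrix.mulVec_add, mulVec_rowSpace_zero H A hHA u hu, add_zero]
  set s := H.mulVec e with hs
  have hsle : hammingNorm s ≤ t := by
    calc hammingNorm s = hammingNorm (H.mulVec e') := by rw [hHe']
      _ ≤ w * hammingNorm e' := hammingNorm_mulVec_le H w hcol e'
      _ ≤ w * t' := Nat.mul_le_mul_left w (by rw [hmin] at *; exact le_trans (le_of_eq hmin) he)
      _ ≤ t := hwt
  obtain ⟨e'', he'', hred⟩ := hsound s ⟨e, rfl⟩ hsle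
  obtain ⟨u'', hu'', hmin''⟩ := redW_spec A e''
  set v := e' + (e'' + u'') with hv
  have hvker : H.mulVec v = 0 := by
    rw [hv, Matrix.mulVec_add, hHe', Matrix.mulVec_add, he'',
      mulVec_rowSpace_zero H A hHA u'' hu'', add_zero]
    funext i
    exact CharTwo.add_self_eq_zero _
  have hvmem : v ∈ rowSpace A := by
    by_contra hnot
    have hlt := hdmin v hvker hnot
    have hbound : (hammingNorm v : ℝ) ≤ (t' : ℝ) + f t := by
      have h1 : hammingNorm v ≤ hammingNorm e' + hammingNorm (e'' + u'') :=
        hammingNorm_add_le e' (e'' + u'')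
      have h2 : (hammingNorm e' : ℝ) ≤ (t' : ℝ) := by
        exact_mod_cast le_trans (le_of_eq hmin) he
      have h3 : (hammingNorm (e'' + u'') : ℝ) ≤ f t := by
        rw [hmin'']
        exact le_trans hred (hf hsle)
      calc (hammingNorm v : ℝ) ≤ (hammingNorm e' : ℝ) + (hammingNorm (e'' + u'') : ℝ) := by
            exact_mod_cast h1
        _ ≤ (t' : ℝ) + f t := add_le_add h2 h3
    linarith
  have hcoset : redW A e = redW A e'' := by
    have hw : v + u'' + u ∈ rowSpace A :=
      Submodule.add_mem _ (Submodule.add_mem _ hvmem hu'') hu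
    have hee : e = e'' + (v + u'' + u) := by
      have h2 : ∀ x : Fin n → ZMod 2, x + x = 0 := fun x => by
        funext i; exact CharTwo.add_self_eq_zero _
      rw [hv, he']
      calc e = e + (e'' + e'') + (u + u) + (u'' + u'') := by
            rw [h2, h2, h2]; abel
        _ = e'' + (e + u + (e'' + u'') + u'' + u) := by abel
    rw [hee, redW_coset A e'' _ hw]
  rw [hcoset]
  exact le_trans hred (by rw [hs])
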